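/- Let Ω ⊆ ℝⁿ be a bounded open set, T > 0, and let u : (0,T)×Ω → ℝⁿ and p : (0,T)×Ω → ℝ be locally integrable with u(t,·) ∈ L²(Ω;ℝⁿ) for a.e. t. Suppose that for every χ ∈ C_c^∞((0,T)) and every ψ ∈ C_c^1(Ω) (continuously differentiable with compact support in Ω) the local energy balance holds: ∫₀ᵀ χ′(t) ∫_Ω (|u(t,x)|²/2) ψ(x) dx dt + ∫₀ᵀ χ(t) ∫_Ω (|u(t,x)|²/2 + p(t,x)) u(t,x)·∇ψ(x) dx dt = 0, all integrands being integrable. Let d(x) := dist(x, ℝⁿ∖Ω), assume d is C¹ with |∇d| = 1 on {x ∈ Ω : d(x) < η₀} for some η₀ > 0, and assume the flux condition: lim_{η→0⁺} (1/η) ∫₀ᵀ ∫_{{x∈Ω : η/4 < d(x) < η/2}} | (|u|²/2 + p)(t,x) · u(t,x)·∇d(x) | dx dt = 0. Finally, assume t ↦ ‖u(t,·)‖_{L²(Ω)} belongs to L^q(0,T) for some q ∈ [1,∞]. Then for a.e. t₁, t₂ ∈ (0,T), ∫_Ω |u(t₂,x)|² dx = ∫_Ω |u(t₁,x)|² dx.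 -/

import Mathlib

open MeasureTheory Metric Set Function Filter
open scoped ENNReal Topology Convolution

noncomputable section

/-- `ℝⁿ` with the Euclidean norm. -/
abbrev Eu (n : ℕ) : Type := EuclideanSpace ℝ (Fin n)

/-- The partial derivative `∂f/∂xᵢ` of a scalar function on `ℝⁿ`. -/
def pd {n : ℕ} (i : Fin n) (f : Eu n → ℝ) (x : Eu n) : ℝ :=
  fderiv ℝ f x (EuclideanSpace.single i 1)

section Aux


private lemma derivZero_of_constOn_Iic {f : ℝ → ℝ} {s : ℝ} (hf : DifferentiableAt ℝ f s)
    (h : ∀ t ≤ s, f t = f s) : deriv f s = 0 := by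
  have hu : UniqueDiffWithinAt ℝ (Iic s) s := uniqueDiffOn_Iic s s (mem_Iic.2 le_rfl)
  have h1 : HasDerivWithinAt f (deriv f s) (Iic s) s := hf.hasDerivAt.hasDerivWithinAt
  have h2 : HasDerivWithinAt f 0 (Iic s) s :=
    (hasDerivWithinAt_const s (Iic s) (f s)).congr (fun t ht => h t ht) (h s le_rfl)
  have := h1.derivWithin hu
  rw [h2.derivWithin hu] at this
  exact this.symm

private lemma derivZero_of_constOn_Ici {f : ℝ → ℝ} {s : ℝ} (hf : DifferentiableAt ℝ f s)
    (h : ∀ t, s ≤ t → f t = f s) : deriv f s = 0 := by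
  have hu : UniqueDiffWithinAt ℝ (Ici s) s := uniqueDiffOn_Ici s s (mem_Ici.2 le_rfl)
  have h1 : HasDerivWithinAt f (deriv f s) (Ici s) s := hf.hasDerivAt.hasDerivWithinAt
  have h2 : HasDerivWithinAt f 0 (Ici s) s :=
    (hasDerivWithinAt_const s (Ici s) (f s)).congr (fun t ht => h t ht) (h s le_rfl)
  have := h1.derivWithin hu
  rw [h2.derivWithin hu] at this
  exact this.symm

/-- the cutoff profile -/
private def phi : ℝ → ℝ := fun s => Real.smoothTransition (4 * s - 1)

private lemma phi_contDiff : ContDiff ℝ (⊤ : ℕ∞) phi :=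
  Real.smoothTransition.contDiff.comp (by fun_prop)

private lemma phi_nonneg (s : ℝ) : 0 ≤ phi s := Real.smoothTransition.nonneg _
private lemma phi_le_one (s : ℝ) : phi s ≤ 1 := Real.smoothTransition.le_one _
private lemma phi_zero {s : ℝ} (h : s ≤ 1/4) : phi s = 0 :=
  Real.smoothTransition.zero_of_nonpos (by linarith)
private lemma phi_one {s : ℝ} (h : 1/2 ≤ s) : phi s = 1 :=
  Real.smoothTransition.one_of_one_le (by linarith)

private lemma phi_deriv_zero {s : ℝ} (h : s ≤ 1/4 ∨ 1/2 ≤ s) : deriv phi s = 0 := by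
  have hdiff : DifferentiableAt ℝ phi s :=
    (phi_contDiff.differentiable (by norm_num)).differentiableAt
  rcases h with h | h
  · exact derivZero_of_constOn_Iic hdiff (fun t ht => by
      rw [phi_zero (le_trans ht h), phi_zero h])
  · exact derivZero_of_constOn_Ici hdiff (fun t ht => by
      rw [phi_one (le_trans h ht), phi_one h])

private lemma phi_deriv_bound : ∃ M : ℝ, 0 ≤ M ∧ ∀ s, |deriv phi s| ≤ M := by
  have hcont : Continuous (deriv phi) := phi_contDiff.continuous_deriv (by norm_num)
  have hsupp : support (deriv phi) ⊆ Icc (1/4) (1/2) := by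
    intro s hs
    by_contra hc
    simp only [mem_Icc, not_and_or, not_le] at hc
    exact hs (phi_deriv_zero (by rcases hc with h|h; exacts [Or.inl h.le, Or.inr h.le]))
  have hcs : HasCompactSupport (deriv phi) :=
    HasCompactSupport.intro isCompact_Icc (fun x hx => by
      by_contra hc; exact hx (hsupp hc))
  obtain ⟨M, hM⟩ := hcs.exists_bound_of_continuous hcont
  exact ⟨max M 0, le_max_right _ _, fun s => le_trans (by simpa using hM s) (le_max_left _ _)⟩


private lemma osc {g : ℝ → ℝ} (hg : Integrable g volume) {a b C : ℝ}
    (h : ∀ χ : ℝ → ℝ, ContDiff ℝ (⊤ : ℕ∞) χ → HasCompactSupport χ → tsupport χ ⊆ Ioo a b →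
      (∀ t, |χ t| ≤ 1) → |∫ t, deriv χ t * g t| ≤ C) :
    ∃ N : Set ℝ, volume N = 0 ∧ ∀ t₁ ∉ N, ∀ t₂ ∉ N,
      t₁ ∈ Ioo a b → t₂ ∈ Ioo a b → |g t₁ - g t₂| ≤ C := by
  -- bump family
  have hj : ∀ j : ℕ, (0:ℝ) < 1/(2*(j+1)) ∧ (1:ℝ)/(2*(j+1)) < 1/(j+1) := by
    intro j
    constructor
    · positivity
    · rw [div_lt_div_iff₀ (by positivity) (by positivity)]
      have : (0:ℝ) < (j:ℝ) + 1 := by positivity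
      nlinarith
  set φb : ℕ → ContDiffBump (0:ℝ) :=
    fun j => ⟨1/(2*(j+1)), 1/(j+1), (hj j).1, (hj j).2⟩ with hφb
  have hrout : ∀ j, (φb j).rOut = 1/(j+1) := fun j => rfl
  have hφ0 : Tendsto (fun j => (φb j).rOut) atTop (𝓝 0) := by
    simp only [hrout]
    exact tendsto_one_div_add_atTop_nhds_zero_nat
  have hae := ContDiffBump.ae_convolution_tendsto_right_of_locallyIntegrable
    (μ := volume) (φ := φb) (l := atTop) (K := 2) hφ0
    (Eventually.of_forall (fun j => by
      show (1:ℝ)/(j+1) ≤ 2 * (1/(2*(j+1)))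
      have : 2 * ((1:ℝ)/(2*(j+1))) = 1/(j+1) := by
        field_simp
      rw [this])) hg.locallyIntegrable
  refine ⟨{x | ¬ Tendsto (fun j => ((φb j).normed volume ⋆[ContinuousLinearMap.lsmul ℝ ℝ, volume] g) x)
      atTop (𝓝 (g x))}, hae, ?_⟩
  intro t₁ ht₁N t₂ ht₂N ht₁ ht₂
  have ht1 : Tendsto (fun j => ((φb j).normed volume ⋆[ContinuousLinearMap.lsmul ℝ ℝ, volume] g) t₁)
      atTop (𝓝 (g t₁)) := not_not.1 ht₁N
  have ht2 : Tendsto (fun j => ((φb j).normed volume ⋆[ContinuousLinearMap.lsmul ℝ ℝ, volume] g) t₂)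
      atTop (𝓝 (g t₂)) := not_not.1 ht₂N
  set r₀ : ℝ := min (min (t₁ - a) (b - t₁)) (min (t₂ - a) (b - t₂)) with hr₀def
  have hr₀ : 0 < r₀ := by
    simp only [hr₀def, lt_min_iff]
    obtain ⟨h1, h2⟩ := ht₁; obtain ⟨h3, h4⟩ := ht₂
    refine ⟨⟨by linarith, by linarith⟩, by linarith, by linarith⟩
  have claim : ∀ j : ℕ, (φb j).rOut < r₀ →
      |((φb j).normed volume ⋆[ContinuousLinearMap.lsmul ℝ ℝ, volume] g) t₁ -
        ((φb j).normed volume ⋆[ContinuousLinearMap.lsmul ℝ ℝ, volume] g) t₂| ≤ C := by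
    intro j hro
    set ρ : ℝ → ℝ := (φb j).normed volume with hρdef
    have hρc : Continuous ρ := (φb j).continuous_normed
    have hρi : Integrable ρ volume := (φb j).integrable_normed
    have hρnn : ∀ x, 0 ≤ ρ x := fun x => (φb j).nonneg_normed x
    have hρz : ∀ x, (φb j).rOut ≤ |x| → ρ x = 0 := by
      intro x hx
      by_contra hc
      have : x ∈ ball (0:ℝ) (φb j).rOut := by
        rw [← (φb j).support_normed_eq (μ := volume)]; exact hc
      rw [mem_ball, dist_zero_right, Real.norm_eq_abs] at this
      linarith
    set f : ℝ → ℝ := fun s => ρ (s - t₁) - ρ (s - t₂) with hfdef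
    have hf_cont : Continuous f := by
      apply Continuous.sub <;> exact hρc.comp (by fun_prop)
    have hf_int : Integrable f volume :=
      (hρi.comp_sub_right t₁).sub (hρi.comp_sub_right t₂)
    set χ : ℝ → ℝ := fun t => ∫ s in a..t, f s with hχdef
    have hder : ∀ t, HasDerivAt χ (f t) t := fun t =>
      intervalIntegral.integral_hasDerivAt_right (hf_int.intervalIntegrable)
        (hf_cont.stronglyMeasurableAtFilter _ _) hf_cont.continuousAt
    have hderiv_eq : deriv χ = f := funext fun t => (hder t).deriv
    have hχsmooth : ContDiff ℝ (⊤ : ℕ∞) χ := by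
      rw [show ((⊤ : ℕ∞) : ℕ∞) = (⊤ : ℕ∞) from rfl, contDiff_infty_iff_deriv]
      constructor
      · exact fun t => (hder t).differentiableAt
      · rw [hderiv_eq]
        apply ContDiff.sub <;>
          exact ((φb j).contDiff_normed).comp (contDiff_id.sub contDiff_const)
    set m : ℝ := min t₁ t₂ - (φb j).rOut with hmdef
    set M : ℝ := max t₁ t₂ + (φb j).rOut with hMdef
    have ham : a < m := by
      simp only [hmdef, lt_sub_iff_add_lt]
      rcases min_cases t₁ t₂ with ⟨he, _⟩ | ⟨he, _⟩ <;> rw [he]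
      · have : r₀ ≤ t₁ - a := (min_le_left _ _).trans (min_le_left _ _)
        linarith
      · have : r₀ ≤ t₂ - a := (min_le_right _ _).trans (min_le_left _ _)
        linarith
    have hMb : M < b := by
      simp only [hMdef]
      rcases max_cases t₁ t₂ with ⟨he, _⟩ | ⟨he, _⟩ <;> rw [he]
      · have : r₀ ≤ b - t₁ := (min_le_left _ _).trans (min_le_right _ _)
        linarith
      · have : r₀ ≤ b - t₂ := (min_le_right _ _).trans (min_le_right _ _)
        linarith
    have hroutpos : 0 < (φb j).rOut := (φb j).rOut_pos
    have hfz : ∀ s, s ∉ Ioo m M → f s = 0 := by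
      intro s hs
      simp only [mem_Ioo, not_and_or, not_lt] at hs
      have hmin1 : min t₁ t₂ ≤ t₁ := min_le_left _ _
      have hmin2 : min t₁ t₂ ≤ t₂ := min_le_right _ _
      have hmax1 : t₁ ≤ max t₁ t₂ := le_max_left _ _
      have hmax2 : t₂ ≤ max t₁ t₂ := le_max_right _ _
      have h1 : ρ (s - t₁) = 0 := by
        apply hρz
        rcases hs with hs | hs <;>
          (rcases abs_cases (s - t₁) with ⟨he, hp⟩ | ⟨he, hp⟩ <;> rw [he] <;> linarith [hmdef, hMdef])
      have h2 : ρ (s - t₂) = 0 := by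
        apply hρz
        rcases hs with hs | hs <;>
          (rcases abs_cases (s - t₂) with ⟨he, hp⟩ | ⟨he, hp⟩ <;> rw [he] <;> linarith [hmdef, hMdef])
      show ρ (s - t₁) - ρ (s - t₂) = 0
      rw [h1, h2, sub_self]
    have hχ0 : ∀ t, t ∉ Icc m M → χ t = 0 := by
      intro t ht
      simp only [mem_Icc, not_and_or, not_le] at ht
      rcases ht with ht | ht
      · have heq : EqOn f 0 (uIcc a t) := by
          intro s hs
          rw [mem_uIcc] at hs
          apply hfz
          intro hsIoo
          have h1 : m < s := hsIoo.1
          rcases hs with ⟨_, hs2⟩ | ⟨_, hs2⟩ <;> linarith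
        show (∫ s in a..t, f s) = 0
        rw [intervalIntegral.integral_congr heq]
        simp
      · have hmM : m < M := by
          have h5 : min t₁ t₂ ≤ max t₁ t₂ := (min_le_left _ _).trans (le_max_left _ _)
          linarith
        have hat : a ≤ t := by linarith
        have h0 : ∀ s ∉ Ioc a t, f s = 0 := by
          intro s hs
          simp only [mem_Ioc, not_and_or, not_lt, not_le] at hs
          apply hfz
          intro hsIoo
          rcases hs with hs | hs
          · exact absurd hsIoo.1 (by linarith)
          · exact absurd hsIoo.2 (by linarith)
        show (∫ s in a..t, f s) = 0
        rw [intervalIntegral.integral_of_le hat,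
          setIntegral_eq_integral_of_forall_compl_eq_zero h0]
        show (∫ s, (ρ (s - t₁) - ρ (s - t₂))) = 0
        rw [integral_sub (hρi.comp_sub_right t₁) (hρi.comp_sub_right t₂),
          integral_sub_right_eq_self ρ t₁, integral_sub_right_eq_self ρ t₂, sub_self]
    have hχcs : HasCompactSupport χ :=
      HasCompactSupport.intro isCompact_Icc hχ0
    have hχts : tsupport χ ⊆ Ioo a b := by
      refine subset_trans (closure_minimal (fun t ht => ?_) isClosed_Icc)
        (Icc_subset_Ioo ham hMb)
      by_contra hc
      exact ht (hχ0 t hc)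
    have hχbd : ∀ t, |χ t| ≤ 1 := by
      intro t
      have hsplit : χ t = (∫ s in a..t, ρ (s - t₁)) - ∫ s in a..t, ρ (s - t₂) := by
        show (∫ s in a..t, f s) = _
        rw [← intervalIntegral.integral_sub ((hρi.comp_sub_right t₁).intervalIntegrable)
          ((hρi.comp_sub_right t₂).intervalIntegrable)]
      have hbnd : ∀ c : ℝ, a ≤ t → (0 ≤ ∫ s in a..t, ρ (s - c)) ∧ (∫ s in a..t, ρ (s - c)) ≤ 1 := by
        intro c hat
        rw [intervalIntegral.integral_of_le hat]
        constructor
        · exact setIntegral_nonneg measurableSet_Ioc (fun s _ => hρnn _)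
        · calc ∫ s in Ioc a t, ρ (s - c) ≤ ∫ s, ρ (s - c) :=
                setIntegral_le_integral (hρi.comp_sub_right c)
                  (Eventually.of_forall (fun s => hρnn _))
            _ = 1 := by rw [integral_sub_right_eq_self ρ c]; exact (φb j).integral_normed
      have hbnd' : ∀ c : ℝ, t ≤ a → (-1 ≤ ∫ s in a..t, ρ (s - c)) ∧ (∫ s in a..t, ρ (s - c)) ≤ 0 := by
        intro c hta
        rw [intervalIntegral.integral_symm, intervalIntegral.integral_of_le hta]
        constructor
        · rw [neg_le, neg_neg]
          calc ∫ s in Ioc t a, ρ (s - c) ≤ ∫ s, ρ (s - c) :=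
                setIntegral_le_integral (hρi.comp_sub_right c)
                  (Eventually.of_forall (fun s => hρnn _))
            _ = 1 := by rw [integral_sub_right_eq_self ρ c]; exact (φb j).integral_normed
        · rw [neg_nonpos]
          exact setIntegral_nonneg measurableSet_Ioc (fun s _ => hρnn _)
      rw [hsplit, abs_sub_le_iff]
      rcases le_total a t with hat | hta
      · obtain ⟨h1, h2⟩ := hbnd t₁ hat; obtain ⟨h3, h4⟩ := hbnd t₂ hat
        constructor <;> linarith
      · obtain ⟨h1, h2⟩ := hbnd' t₁ hta; obtain ⟨h3, h4⟩ := hbnd' t₂ hta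
        constructor <;> linarith
    -- identify the integral with the difference of convolutions
    obtain ⟨Cρ, hCρ⟩ := ((φb j).hasCompactSupport_normed).exists_bound_of_continuous hρc
    have hconv : ∀ c : ℝ, ((φb j).normed volume ⋆[ContinuousLinearMap.lsmul ℝ ℝ, volume] g) c
        = ∫ s, ρ (s - c) * g s := by
      intro c
      rw [convolution_eq_swap]
      simp only [ContinuousLinearMap.lsmul_apply, smul_eq_mul]
      congr 1
      ext s
      rw [show c - s = -(s - c) by ring, (φb j).normed_neg]
    have hint1 : Integrable (fun s => ρ (s - t₁) * g s) volume :=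
      hg.bdd_mul ((hρc.comp (by fun_prop)).aestronglyMeasurable)
        (c := Cρ) (Eventually.of_forall fun s => hCρ _)
    have hint2 : Integrable (fun s => ρ (s - t₂) * g s) volume :=
      hg.bdd_mul ((hρc.comp (by fun_prop)).aestronglyMeasurable)
        (c := Cρ) (Eventually.of_forall fun s => hCρ _)
    have hkey : ∫ s, deriv χ s * g s
        = ((φb j).normed volume ⋆[ContinuousLinearMap.lsmul ℝ ℝ, volume] g) t₁ -
          ((φb j).normed volume ⋆[ContinuousLinearMap.lsmul ℝ ℝ, volume] g) t₂ := by
      rw [hderiv_eq, hconv, hconv, ← integral_sub hint1 hint2]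
      congr 1
      ext s
      simp [hfdef, sub_mul]
    rw [← hkey]
    exact h χ hχsmooth hχcs hχts hχbd
  have hev : ∀ᶠ j in atTop, |((φb j).normed volume ⋆[ContinuousLinearMap.lsmul ℝ ℝ, volume] g) t₁ -
      ((φb j).normed volume ⋆[ContinuousLinearMap.lsmul ℝ ℝ, volume] g) t₂| ≤ C := by
    filter_upwards [hφ0.eventually (eventually_lt_nhds hr₀)] with j hjr
    exact claim j hjr
  exact le_of_tendsto ((ht1.sub ht2).abs) hev
private lemma gradient_coord {n : ℕ} (g : Eu n → ℝ) (x : Eu n) (i : Fin n) :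
    fderiv ℝ g x (EuclideanSpace.single i 1) = gradient g x i := by
  have h1 : (inner ℝ (gradient g x) (EuclideanSpace.single i (1:ℝ)) : ℝ)
      = fderiv ℝ g x (EuclideanSpace.single i 1) :=
    InnerProductSpace.toDual_symm_apply
  rw [← h1, real_inner_comm, EuclideanSpace.inner_single_left]
  simp

private lemma cutoff_props {n : ℕ} {Ω : Set (Eu n)} (hΩo : IsOpen Ω)
    (hΩb : Bornology.IsBounded Ω)
    {η₀ : ℝ} (hη₀ : 0 < η₀)
    (hd : ContDiffOn ℝ 1 (fun x : Eu n => infDist x Ωᶜ) {x ∈ Ω | infDist x Ωᶜ < η₀})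
    {η : ℝ} (hη : 0 < η) (hηlt : η < η₀) :
    ∃ ψ : Eu n → ℝ, ContDiff ℝ 1 ψ ∧ HasCompactSupport ψ ∧ tsupport ψ ⊆ Ω ∧
      (∀ x, ψ x = phi (infDist x Ωᶜ / η)) ∧
      (∀ x, x ∉ {x ∈ Ω | η/4 < infDist x Ωᶜ ∧ infDist x Ωᶜ < η/2} → fderiv ℝ ψ x = 0) ∧
      (∀ x ∈ {x ∈ Ω | η/4 < infDist x Ωᶜ ∧ infDist x Ωᶜ < η/2},
        fderiv ℝ ψ x = (deriv phi (infDist x Ωᶜ / η) * η⁻¹) •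
          fderiv ℝ (fun y : Eu n => infDist y Ωᶜ) x) := by
  set d : Eu n → ℝ := fun x => infDist x Ωᶜ with hddef
  have hdcont : Continuous d := continuous_infDist_pt _
  have hdmem : ∀ x : Eu n, 0 < d x → x ∈ Ω := by
    intro x hx
    by_contra hc
    have h0 : d x = 0 := infDist_zero_of_mem hc
    linarith
  set S : Set (Eu n) := {x ∈ Ω | d x < η₀} with hSdef
  have hSopen : IsOpen S := by
    have : S = Ω ∩ d ⁻¹' (Iio η₀) := by
      ext x; simp [hSdef, mem_preimage]
    rw [this]
    exact hΩo.inter (isOpen_Iio.preimage hdcont)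
  set ψ : Eu n → ℝ := fun x => phi (d x / η) with hψdef
  -- the fderiv formula on S
  have hformula : ∀ x ∈ S, HasFDerivAt ψ
      ((deriv phi (d x / η) * η⁻¹) • fderiv ℝ d x) x := by
    intro x hx
    have hdx : ContDiffAt ℝ 1 d x := hd.contDiffAt (hSopen.mem_nhds hx)
    have hdiff : DifferentiableAt ℝ d x := hdx.differentiableAt one_ne_zero
    have hq : HasFDerivAt (fun y => d y / η) (η⁻¹ • fderiv ℝ d x) x := by
      simpa [div_eq_inv_mul] using (hdiff.hasFDerivAt.const_mul η⁻¹)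
    have hφ' : HasDerivAt phi (deriv phi (d x / η)) (d x / η) :=
      ((phi_contDiff.differentiable (by norm_num)).differentiableAt).hasDerivAt
    have := hφ'.comp_hasFDerivAt x hq
    rw [smul_smul] at this
    exact this
  -- out of strip: fderiv zero
  have hzero : ∀ x : Eu n, (d x < η/4 ∨ η/2 < d x) → fderiv ℝ ψ x = 0 := by
    intro x hx
    rcases hx with hx | hx
    · have hev : ψ =ᶠ[𝓝 x] (fun _ => 0) := by
        filter_upwards [hdcont.continuousAt.preimage_mem_nhds (Iio_mem_nhds hx)] with y hy
        exact phi_zero (by rw [div_le_iff₀ hη]; rw [mem_preimage, mem_Iio] at hy; linarith)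
      rw [hev.fderiv_eq, fderiv_fun_const]
      rfl
    · have hev : ψ =ᶠ[𝓝 x] (fun _ => 1) := by
        filter_upwards [hdcont.continuousAt.preimage_mem_nhds (Ioi_mem_nhds hx)] with y hy
        exact phi_one (by rw [le_div_iff₀ hη]; rw [mem_preimage, mem_Ioi] at hy; linarith)
      rw [hev.fderiv_eq, fderiv_fun_const]
      rfl
  have hsmooth : ContDiff ℝ 1 ψ := by
    rw [contDiff_iff_contDiffAt]
    intro x
    rcases lt_or_ge (d x) (η/4) with hx | hx
    · have hev : ψ =ᶠ[𝓝 x] (fun _ => 0) := by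
        filter_upwards [hdcont.continuousAt.preimage_mem_nhds (Iio_mem_nhds hx)] with y hy
        exact phi_zero (by rw [div_le_iff₀ hη]; rw [mem_preimage, mem_Iio] at hy; linarith)
      exact (contDiffAt_const (c := (0:ℝ))).congr_of_eventuallyEq hev
    rcases lt_or_ge (η/2) (d x) with hx2 | hx2
    · have hev : ψ =ᶠ[𝓝 x] (fun _ => 1) := by
        filter_upwards [hdcont.continuousAt.preimage_mem_nhds (Ioi_mem_nhds hx2)] with y hy
        exact phi_one (by rw [le_div_iff₀ hη]; rw [mem_preimage, mem_Ioi] at hy; linarith)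
      exact (contDiffAt_const (c := (1:ℝ))).congr_of_eventuallyEq hev
    · have hxS : x ∈ S := mem_sep (hdmem x (by linarith)) (by linarith)
      have hdx : ContDiffAt ℝ 1 d x := hd.contDiffAt (hSopen.mem_nhds hxS)
      exact ((phi_contDiff.of_le (by exact_mod_cast le_top)).contDiffAt).comp x (hdx.div_const η)
  have hsupp : ∀ x : Eu n, x ∉ {x : Eu n | η/4 ≤ d x} → ψ x = 0 := by
    intro x hx
    simp only [mem_setOf_eq, not_le] at hx
    exact phi_zero (by rw [div_le_iff₀ hη]; linarith)
  have hKclosed : IsClosed {x : Eu n | η/4 ≤ d x} := isClosed_le continuous_const hdcont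
  have hKsub : {x : Eu n | η/4 ≤ d x} ⊆ Ω := fun x hx => hdmem x (lt_of_lt_of_le (by positivity) hx)
  have hKcompact : IsCompact {x : Eu n | η/4 ≤ d x} :=
    Metric.isCompact_of_isClosed_isBounded hKclosed (hΩb.subset hKsub)
  refine ⟨ψ, hsmooth, HasCompactSupport.intro hKcompact hsupp, ?_, fun x => rfl, ?_, ?_⟩
  · exact subset_trans (closure_minimal (fun x hx => by
      by_contra hc; exact hx (hsupp x hc)) hKclosed) hKsub
  · intro x hx
    simp only [mem_setOf_eq, not_and_or] at hx
    rcases lt_or_ge (d x) (η/4) with h1 | h1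
    · exact hzero x (Or.inl h1)
    rcases lt_or_ge (η/2) (d x) with h2 | h2
    · exact hzero x (Or.inr h2)
    · -- η/4 ≤ d x ≤ η/2, but not in strip: boundary cases where deriv phi vanishes
      have hxS : x ∈ S := ⟨hdmem x (by linarith), by linarith⟩
      rw [(hformula x hxS).fderiv]
      have : deriv phi (d x / η) = 0 := by
        have hA : d x ≤ η/4 ∨ η/2 ≤ d x := by
          have hxΩ : x ∈ Ω := hdmem x (by linarith)
          rcases hx with hx | hx | hx
          · exact absurd hxΩ hx
          · exact Or.inl (le_of_not_gt hx)
          · exact Or.inr (le_of_not_gt hx)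
        apply phi_deriv_zero
        rcases hA with hA | hA
        · exact Or.inl (by rw [div_le_iff₀ hη]; linarith)
        · exact Or.inr (by rw [le_div_iff₀ hη]; linarith)
      rw [this, zero_mul, zero_smul]
  · intro x hx
    rw [mem_sep_iff] at hx
    obtain ⟨hxΩ, hx1, hx2⟩ := hx
    have hxS : x ∈ S := ⟨hxΩ, by linarith⟩
    exact (hformula x hxS).fderiv

end Aux

set_option maxHeartbeats 2000000 in
/-- the passage from local to global energy conservation in the proof of
Theorem 4.1: the local energy balance against test functions `χ(t)ψ(x)`, together with
the vanishing of the normal energy flux near the boundary, implies that the `L²` norm of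
`u(t,·)` is independent of `t` for a.e. `t`. -/
theorem local_to_global_energy
    {n : ℕ} {Ω : Set (Eu n)} (hΩo : IsOpen Ω) (hΩb : Bornology.IsBounded Ω)
    {T : ℝ} (hT : 0 < T)
    (u : ℝ → Eu n → Eu n) (p : ℝ → Eu n → ℝ)
    (huli : LocallyIntegrableOn (fun q : ℝ × Eu n => u q.1 q.2) (Ioo 0 T ×ˢ Ω))
    (hpli : LocallyIntegrableOn (fun q : ℝ × Eu n => p q.1 q.2) (Ioo 0 T ×ˢ Ω))
    (huL2 : ∀ᵐ t ∂volume.restrict (Ioo 0 T), MemLp (u t) 2 (volume.restrict Ω))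
    (hLq : ∃ q : ℝ≥0∞, 1 ≤ q ∧
      MemLp (fun t => (eLpNorm (u t) 2 (volume.restrict Ω)).toReal) q
        (volume.restrict (Ioo 0 T)))
    -- the local energy balance, with integrable integrands
    (hbalance : ∀ χ : ℝ → ℝ, ContDiff ℝ (⊤ : ℕ∞) χ → HasCompactSupport χ →
      tsupport χ ⊆ Ioo 0 T →
      ∀ ψ : Eu n → ℝ, ContDiff ℝ 1 ψ → HasCompactSupport ψ → tsupport ψ ⊆ Ω →
      IntegrableOn (fun q : ℝ × Eu n =>
        deriv χ q.1 * (‖u q.1 q.2‖ ^ 2 / 2 * ψ q.2)) (Ioo 0 T ×ˢ Ω) ∧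
      IntegrableOn (fun q : ℝ × Eu n =>
        χ q.1 * ((‖u q.1 q.2‖ ^ 2 / 2 + p q.1 q.2) *
          ∑ i, u q.1 q.2 i * pd i ψ q.2)) (Ioo 0 T ×ˢ Ω) ∧
      (∫ q in Ioo 0 T ×ˢ Ω, deriv χ q.1 * (‖u q.1 q.2‖ ^ 2 / 2 * ψ q.2)) +
        (∫ q in Ioo 0 T ×ˢ Ω, χ q.1 * ((‖u q.1 q.2‖ ^ 2 / 2 + p q.1 q.2) *
          ∑ i, u q.1 q.2 i * pd i ψ q.2)) = 0)
    -- the distance function is `C¹` with `|∇d| = 1` near the boundary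
    {η₀ : ℝ} (hη₀ : 0 < η₀)
    (hd : ContDiffOn ℝ 1 (fun x : Eu n => infDist x Ωᶜ) {x ∈ Ω | infDist x Ωᶜ < η₀})
    (hd1 : ∀ x ∈ {x ∈ Ω | infDist x Ωᶜ < η₀},
      ‖gradient (fun y : Eu n => infDist y Ωᶜ) x‖ = 1)
    -- the flux condition
    (hflux : Tendsto (fun η : ℝ =>
        ENNReal.ofReal (1/η) *
          ∫⁻ q in Ioo 0 T ×ˢ {x ∈ Ω | η/4 < infDist x Ωᶜ ∧ infDist x Ωᶜ < η/2},
            ENNReal.ofReal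
              |(‖u q.1 q.2‖ ^ 2 / 2 + p q.1 q.2) *
                ∑ i, u q.1 q.2 i * gradient (fun y : Eu n => infDist y Ωᶜ) q.2 i|)
      (𝓝[>] 0) (𝓝 0)) :
    ∀ᵐ t₁ ∂volume.restrict (Ioo 0 T), ∀ᵐ t₂ ∂volume.restrict (Ioo 0 T),
      ∫ x in Ω, ‖u t₂ x‖ ^ 2 = ∫ x in Ω, ‖u t₁ x‖ ^ 2 := by
  classical
  -- trivial case: Ω empty
  rcases Set.eq_empty_or_nonempty Ω with hΩe | hΩne
  · filter_upwards with t₁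
    filter_upwards with t₂
    rw [hΩe]
    simp
  -- degenerate case: Ωᶜ empty (impossible, by `hd1`)
  rcases Set.eq_empty_or_nonempty Ωᶜ with hce | hcne
  · exfalso
    obtain ⟨x₀, hx₀⟩ := hΩne
    have h0 : (fun y : Eu n => infDist y Ωᶜ) = fun _ => (0:ℝ) := by
      funext y; rw [hce, infDist_empty]
    have h1 := hd1 x₀ (mem_sep hx₀ (by rw [hce, infDist_empty]; exact hη₀))
    rw [h0] at h1
    rw [gradient_fun_const] at h1
    simp at h1
  -- basic facts about the distance function
  have hdcont : Continuous (fun x : Eu n => infDist x Ωᶜ) := continuous_infDist_pt _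
  have hdmem : ∀ x : Eu n, 0 < infDist x Ωᶜ → x ∈ Ω := by
    intro x hx
    by_contra hc
    have h0 : infDist x Ωᶜ = 0 := infDist_zero_of_mem hc
    linarith
  have hdpos : ∀ x ∈ Ω, 0 < infDist x Ωᶜ := by
    intro x hx
    rw [← (isClosed_compl_iff.2 hΩo).notMem_iff_infDist_pos hcne]
    simp [hx]
  -- bound on the derivative of the cutoff profile
  obtain ⟨M, hM0, hMb⟩ := phi_deriv_bound
  -- the flux quantity
  set Flux : ℝ → ℝ≥0∞ := fun η =>
    ENNReal.ofReal (1/η) *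
      ∫⁻ q in Ioo 0 T ×ˢ {x ∈ Ω | η/4 < infDist x Ωᶜ ∧ infDist x Ωᶜ < η/2},
        ENNReal.ofReal
          |(‖u q.1 q.2‖ ^ 2 / 2 + p q.1 q.2) *
            ∑ i, u q.1 q.2 i * gradient (fun y : Eu n => infDist y Ωᶜ) q.2 i|
    with hFluxdef
  -- eventual finiteness of `Flux`
  obtain ⟨θ, hθmem, hθ⟩ : ∃ θ ∈ Ioi (0:ℝ), Ioo 0 θ ⊆ {η : ℝ | Flux η < 1} := by
    refine mem_nhdsGT_iff_exists_Ioo_subset.1 ?_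
    exact hflux.eventually_lt_const (by norm_num)
  have hθpos : 0 < θ := hθmem
  -- the sequence of cutoff scales
  set ηs : ℕ → ℝ := fun k => min θ η₀ / (2 * (k + 1)) with hηs
  have hηspos : ∀ k, 0 < ηs k := by
    intro k
    apply div_pos (lt_min hθpos hη₀)
    positivity
  have hηslt : ∀ k, ηs k < min θ η₀ := by
    intro k
    rw [hηs]
    simp only
    rw [div_lt_iff₀ (by positivity)]
    nlinarith [lt_min hθpos hη₀, (Nat.cast_nonneg k : (0:ℝ) ≤ k)]
  have hηsθ : ∀ k, ηs k < θ := fun k => lt_of_lt_of_le (hηslt k) (min_le_left _ _)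
  have hηsη₀ : ∀ k, ηs k < η₀ := fun k => lt_of_lt_of_le (hηslt k) (min_le_right _ _)
  have hηs0 : Tendsto ηs atTop (𝓝[>] 0) := by
    apply tendsto_nhdsWithin_of_tendsto_nhds_of_eventually_within
    · have h1 : Tendsto (fun k : ℕ => (min θ η₀ / 2) * (1 / (k + 1))) atTop (𝓝 0) := by
        simpa using tendsto_one_div_add_atTop_nhds_zero_nat.const_mul (min θ η₀ / 2)
      refine h1.congr (fun k => ?_)
      rw [hηs]
      simp only
      field_simp
    · exact Eventually.of_forall (fun k => hηspos k)
  have hFluxlt : ∀ k, Flux (ηs k) < 1 := fun k => hθ ⟨hηspos k, hηsθ k⟩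
  set fluxr : ℕ → ℝ := fun k => (Flux (ηs k)).toReal with hfluxrdef
  have hfluxr0 : Tendsto fluxr atTop (𝓝 0) := by
    have h1 : Tendsto (fun k => Flux (ηs k)) atTop (𝓝 0) := hflux.comp hηs0
    have h2 := (ENNReal.tendsto_toReal (a := 0) (by simp)).comp h1
    exact h2
  have hfluxrnn : ∀ k, 0 ≤ fluxr k := fun k => ENNReal.toReal_nonneg
  -- choose the cutoff functions
  choose ψ hψ1 hψ2 hψ3 hψ4 hψ5 hψ6 using
    fun k => cutoff_props hΩo hΩb hη₀ hd (hηspos k) (hηsη₀ k)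
  -- the (truncated) energy profiles
  set E : ℝ → ℝ := fun t => ∫ x in Ω, ‖u t x‖ ^ 2 / 2 with hEdef
  set Eψ : ℕ → ℝ → ℝ := fun k t => ∫ x in Ω, ‖u t x‖ ^ 2 / 2 * ψ k x with hEψdef
  have hmeasΩ : MeasurableSet Ω := hΩo.measurableSet
  have hprodmeas : volume.restrict (Ioo 0 T ×ˢ Ω) =
      (volume.restrict (Ioo 0 T)).prod (volume.restrict Ω) := by
    rw [Measure.prod_restrict, ← Measure.volume_eq_prod]
  -- KEY ESTIMATE
  have KEY : ∀ k : ℕ, ∀ χ : ℝ → ℝ, ContDiff ℝ (⊤ : ℕ∞) χ → HasCompactSupport χ →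
      tsupport χ ⊆ Ioo 0 T → (∀ t, |χ t| ≤ 1) →
      |∫ t in Ioo 0 T, deriv χ t * Eψ k t| ≤ M * fluxr k := by
    intro k χ hχ1 hχ2 hχ3 hχ4
    obtain ⟨hi1, hi2, hbal⟩ := hbalance χ hχ1 hχ2 hχ3 (ψ k) (hψ1 k) (hψ2 k) (hψ3 k)
    have hstripmeas : MeasurableSet {x ∈ Ω | ηs k/4 < infDist x Ωᶜ ∧ infDist x Ωᶜ < ηs k/2} := by
      have he : {x ∈ Ω | ηs k/4 < infDist x Ωᶜ ∧ infDist x Ωᶜ < ηs k/2}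
          = Ω ∩ ((fun x : Eu n => infDist x Ωᶜ) ⁻¹' (Ioo (ηs k/4) (ηs k/2))) := by
        ext x; simp only [mem_sep_iff, mem_inter_iff, mem_preimage, mem_Ioo]
      rw [he]
      exact hmeasΩ.inter (measurableSet_Ioo.preimage hdcont.measurable)
    -- Fubini for the first term
    have hi1' : Integrable (fun q : ℝ × Eu n => deriv χ q.1 * (‖u q.1 q.2‖ ^ 2 / 2 * ψ k q.2))
        ((volume.restrict (Ioo 0 T)).prod (volume.restrict Ω)) := by
      rw [← hprodmeas]; exact hi1
    have hI1 : (∫ q in Ioo 0 T ×ˢ Ω, deriv χ q.1 * (‖u q.1 q.2‖ ^ 2 / 2 * ψ k q.2))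
        = ∫ t in Ioo 0 T, deriv χ t * Eψ k t := by
      have h1 : (∫ q in Ioo 0 T ×ˢ Ω, deriv χ q.1 * (‖u q.1 q.2‖ ^ 2 / 2 * ψ k q.2))
          = ∫ q, deriv χ q.1 * (‖u q.1 q.2‖ ^ 2 / 2 * ψ k q.2)
            ∂((volume.restrict (Ioo 0 T)).prod (volume.restrict Ω)) := by
        rw [← hprodmeas]
      rw [h1, MeasureTheory.integral_prod _ hi1']
      refine integral_congr_ae (Eventually.of_forall (fun t => ?_))
      show (∫ y in Ω, deriv χ t * (‖u t y‖ ^ 2 / 2 * ψ k y)) = deriv χ t * Eψ k t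
      exact integral_const_mul _ _
    -- pointwise bound for the second integrand
    have hpt : ∀ q : ℝ × Eu n, q ∈ Ioo 0 T ×ˢ Ω →
        ENNReal.ofReal |χ q.1 * ((‖u q.1 q.2‖ ^ 2 / 2 + p q.1 q.2) *
          ∑ i, u q.1 q.2 i * pd i (ψ k) q.2)|
        ≤ ENNReal.ofReal (M * (1/ηs k)) *
            (Ioo 0 T ×ˢ {x ∈ Ω | ηs k/4 < infDist x Ωᶜ ∧ infDist x Ωᶜ < ηs k/2}).indicator
            (fun q => ENNReal.ofReal |(‖u q.1 q.2‖ ^ 2 / 2 + p q.1 q.2) *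
              ∑ i, u q.1 q.2 i * gradient (fun y : Eu n => infDist y Ωᶜ) q.2 i|) q := by
      intro q hq
      by_cases hqs : q.2 ∈ {x ∈ Ω | ηs k/4 < infDist x Ωᶜ ∧ infDist x Ωᶜ < ηs k/2}
      · have hsum : (∑ i, u q.1 q.2 i * pd i (ψ k) q.2)
            = (deriv phi (infDist q.2 Ωᶜ / ηs k) * (ηs k)⁻¹) *
              ∑ i, u q.1 q.2 i * gradient (fun y : Eu n => infDist y Ωᶜ) q.2 i := by
          rw [Finset.mul_sum]
          refine Finset.sum_congr rfl (fun i _ => ?_)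
          rw [pd, hψ6 k q.2 hqs, ContinuousLinearMap.smul_apply, smul_eq_mul, gradient_coord]
          ring
        have hmem : q ∈ Ioo 0 T ×ˢ {x ∈ Ω | ηs k/4 < infDist x Ωᶜ ∧ infDist x Ωᶜ < ηs k/2} :=
          ⟨hq.1, hqs⟩
        rw [indicator_of_mem hmem, ← ENNReal.ofReal_mul (by positivity)]
        apply ENNReal.ofReal_le_ofReal
        rw [hsum]
        have hinv : (0:ℝ) < (ηs k)⁻¹ := inv_pos.2 (hηspos k)
        have h2 : |χ q.1 * ((‖u q.1 q.2‖ ^ 2 / 2 + p q.1 q.2) *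
              ((deriv phi (infDist q.2 Ωᶜ / ηs k) * (ηs k)⁻¹) *
                ∑ i, u q.1 q.2 i * gradient (fun y : Eu n => infDist y Ωᶜ) q.2 i))|
            = |χ q.1| * |deriv phi (infDist q.2 Ωᶜ / ηs k)| * (ηs k)⁻¹ *
              |(‖u q.1 q.2‖ ^ 2 / 2 + p q.1 q.2) *
                ∑ i, u q.1 q.2 i * gradient (fun y : Eu n => infDist y Ωᶜ) q.2 i| := by
          rw [show χ q.1 * ((‖u q.1 q.2‖ ^ 2 / 2 + p q.1 q.2) *
              ((deriv phi (infDist q.2 Ωᶜ / ηs k) * (ηs k)⁻¹) *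
                ∑ i, u q.1 q.2 i * gradient (fun y : Eu n => infDist y Ωᶜ) q.2 i))
            = (χ q.1 * deriv phi (infDist q.2 Ωᶜ / ηs k) * (ηs k)⁻¹) *
              ((‖u q.1 q.2‖ ^ 2 / 2 + p q.1 q.2) *
                ∑ i, u q.1 q.2 i * gradient (fun y : Eu n => infDist y Ωᶜ) q.2 i) from by ring]
          rw [abs_mul, abs_mul, abs_mul, abs_of_nonneg hinv.le]
        rw [h2]
        calc |χ q.1| * |deriv phi (infDist q.2 Ωᶜ / ηs k)| * (ηs k)⁻¹ *
              |(‖u q.1 q.2‖ ^ 2 / 2 + p q.1 q.2) *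
                ∑ i, u q.1 q.2 i * gradient (fun y : Eu n => infDist y Ωᶜ) q.2 i|
            ≤ 1 * M * (ηs k)⁻¹ *
              |(‖u q.1 q.2‖ ^ 2 / 2 + p q.1 q.2) *
                ∑ i, u q.1 q.2 i * gradient (fun y : Eu n => infDist y Ωᶜ) q.2 i| := by
              gcongr
              · exact hχ4 q.1
              · exact hMb _
          _ = M * (1/ηs k) *
              |(‖u q.1 q.2‖ ^ 2 / 2 + p q.1 q.2) *
                ∑ i, u q.1 q.2 i * gradient (fun y : Eu n => infDist y Ωᶜ) q.2 i| := by
              rw [one_div]; ring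
      · have h0 : fderiv ℝ (ψ k) q.2 = 0 := hψ5 k q.2 hqs
        have hsum0 : (∑ i, u q.1 q.2 i * pd i (ψ k) q.2) = 0 := by
          refine Finset.sum_eq_zero (fun i _ => ?_)
          rw [pd, h0]
          simp
        rw [hsum0]
        simp
    -- bound the second term
    have hI2abs : |∫ q in Ioo 0 T ×ˢ Ω, χ q.1 * ((‖u q.1 q.2‖ ^ 2 / 2 + p q.1 q.2) *
        ∑ i, u q.1 q.2 i * pd i (ψ k) q.2)| ≤ M * fluxr k := by
      have habs : |∫ q in Ioo 0 T ×ˢ Ω, χ q.1 * ((‖u q.1 q.2‖ ^ 2 / 2 + p q.1 q.2) *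
          ∑ i, u q.1 q.2 i * pd i (ψ k) q.2)|
          ≤ ∫ q in Ioo 0 T ×ˢ Ω, |χ q.1 * ((‖u q.1 q.2‖ ^ 2 / 2 + p q.1 q.2) *
            ∑ i, u q.1 q.2 i * pd i (ψ k) q.2)| := by
        exact
          norm_integral_le_integral_norm (μ := volume.restrict (Ioo 0 T ×ˢ Ω))
            (f := fun q : ℝ × Eu n => χ q.1 * ((‖u q.1 q.2‖ ^ 2 / 2 + p q.1 q.2) *
              ∑ i, u q.1 q.2 i * pd i (ψ k) q.2))
      have heq : (∫ q in Ioo 0 T ×ˢ Ω, |χ q.1 * ((‖u q.1 q.2‖ ^ 2 / 2 + p q.1 q.2) *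
            ∑ i, u q.1 q.2 i * pd i (ψ k) q.2)|)
          = (∫⁻ q in Ioo 0 T ×ˢ Ω, ENNReal.ofReal |χ q.1 * ((‖u q.1 q.2‖ ^ 2 / 2 + p q.1 q.2) *
            ∑ i, u q.1 q.2 i * pd i (ψ k) q.2)|).toReal := by
        exact integral_eq_lintegral_of_nonneg_ae (Eventually.of_forall (fun q => abs_nonneg _))
          hi2.abs.aestronglyMeasurable
      have hle : (∫⁻ q in Ioo 0 T ×ˢ Ω, ENNReal.ofReal |χ q.1 * ((‖u q.1 q.2‖ ^ 2 / 2 + p q.1 q.2) *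
            ∑ i, u q.1 q.2 i * pd i (ψ k) q.2)|)
          ≤ ENNReal.ofReal M * Flux (ηs k) := by
        have step1 : (∫⁻ q in Ioo 0 T ×ˢ Ω, ENNReal.ofReal |χ q.1 * ((‖u q.1 q.2‖ ^ 2 / 2 + p q.1 q.2) *
              ∑ i, u q.1 q.2 i * pd i (ψ k) q.2)|)
            ≤ ∫⁻ q in Ioo 0 T ×ˢ Ω, ENNReal.ofReal (M * (1/ηs k)) *
              (Ioo 0 T ×ˢ {x ∈ Ω | ηs k/4 < infDist x Ωᶜ ∧ infDist x Ωᶜ < ηs k/2}).indicator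
              (fun q => ENNReal.ofReal |(‖u q.1 q.2‖ ^ 2 / 2 + p q.1 q.2) *
                ∑ i, u q.1 q.2 i * gradient (fun y : Eu n => infDist y Ωᶜ) q.2 i|) q :=
          lintegral_mono_ae ((ae_restrict_iff' (measurableSet_Ioo.prod hmeasΩ)).2
            (Eventually.of_forall hpt))
        have step2 : (∫⁻ q in Ioo 0 T ×ˢ Ω, ENNReal.ofReal (M * (1/ηs k)) *
              (Ioo 0 T ×ˢ {x ∈ Ω | ηs k/4 < infDist x Ωᶜ ∧ infDist x Ωᶜ < ηs k/2}).indicator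
              (fun q => ENNReal.ofReal |(‖u q.1 q.2‖ ^ 2 / 2 + p q.1 q.2) *
                ∑ i, u q.1 q.2 i * gradient (fun y : Eu n => infDist y Ωᶜ) q.2 i|) q)
            = ENNReal.ofReal M * Flux (ηs k) := by
          have hsub2 : (Ioo (0:ℝ) T ×ˢ {x ∈ Ω | ηs k/4 < infDist x Ωᶜ ∧ infDist x Ωᶜ < ηs k/2})
              ⊆ Ioo 0 T ×ˢ Ω := Set.prod_mono subset_rfl (sep_subset _ _)
          rw [lintegral_const_mul' _ _ ENNReal.ofReal_ne_top,
            lintegral_indicator (measurableSet_Ioo.prod hstripmeas),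
            Measure.restrict_restrict (measurableSet_Ioo.prod hstripmeas),
            inter_eq_self_of_subset_left hsub2,
            ENNReal.ofReal_mul hM0, mul_assoc]
        exact le_of_le_of_eq step1 step2
      have hflxfin : ENNReal.ofReal M * Flux (ηs k) ≠ ⊤ :=
        ENNReal.mul_ne_top ENNReal.ofReal_ne_top (ne_top_of_lt (hFluxlt k))
      calc |∫ q in Ioo 0 T ×ˢ Ω, χ q.1 * ((‖u q.1 q.2‖ ^ 2 / 2 + p q.1 q.2) *
            ∑ i, u q.1 q.2 i * pd i (ψ k) q.2)|
          ≤ ∫ q in Ioo 0 T ×ˢ Ω, |χ q.1 * ((‖u q.1 q.2‖ ^ 2 / 2 + p q.1 q.2) *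
            ∑ i, u q.1 q.2 i * pd i (ψ k) q.2)| := habs
        _ = (∫⁻ q in Ioo 0 T ×ˢ Ω, ENNReal.ofReal |χ q.1 * ((‖u q.1 q.2‖ ^ 2 / 2 + p q.1 q.2) *
            ∑ i, u q.1 q.2 i * pd i (ψ k) q.2)|).toReal := heq
        _ ≤ (ENNReal.ofReal M * Flux (ηs k)).toReal := ENNReal.toReal_mono hflxfin hle
        _ = M * fluxr k := by
            rw [ENNReal.toReal_mul, ENNReal.toReal_ofReal hM0]
    rw [← hI1, eq_neg_of_add_eq_zero_left hbal, abs_neg]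
    exact hI2abs
  -- local integrability of the truncated energies
  have INT : ∀ k m : ℕ, IntegrableOn (Eψ k) (Ioo (T/(m+3)) (T - T/(m+3))) volume := by
    intro k m
    set δ : ℝ := T/(m+3) with hδdef
    have hδpos : 0 < δ := by positivity
    have hδltT : δ < T := by
      rw [hδdef, div_lt_iff₀ (by positivity)]
      nlinarith [Nat.cast_nonneg (α := ℝ) m]
    have hrin : (0:ℝ) < T/2 - δ/2 := by linarith
    set B : ContDiffBump (T/2) := ⟨T/2 - δ/2, T/2 - δ/4, hrin, by linarith⟩ with hBdef
    set χm : ℝ → ℝ := fun t => (t - T/2) * B t with hχmdef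
    have hχm1 : ContDiff ℝ (⊤ : ℕ∞) χm :=
      (contDiff_id.sub contDiff_const).mul B.contDiff
    have hχm2 : HasCompactSupport χm := B.hasCompactSupport.mul_left
    have hχm3 : tsupport χm ⊆ Ioo 0 T := by
      have h1 : tsupport χm ⊆ tsupport (B : ℝ → ℝ) := by
        apply closure_mono
        intro t ht
        rw [mem_support] at ht ⊢
        intro hc
        apply ht
        show (t - T/2) * B t = 0
        rw [hc, mul_zero]
      refine subset_trans h1 ?_
      rw [B.tsupport_eq]
      intro t ht
      rw [mem_closedBall, Real.dist_eq, abs_le] at ht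
      have hro : B.rOut = T/2 - δ/4 := rfl
      rw [hro] at ht
      exact ⟨by linarith [ht.1], by linarith [ht.2]⟩
    have hder1 : ∀ t ∈ Ioo δ (T - δ), deriv χm t = 1 := by
      intro t ht
      have hball : Metric.ball (T/2) (T/2 - δ/2) ∈ 𝓝 t := by
        apply Metric.isOpen_ball.mem_nhds
        rw [mem_ball, Real.dist_eq, abs_lt]
        obtain ⟨h1, h2⟩ := ht
        constructor <;> linarith
      have hev : χm =ᶠ[𝓝 t] (fun s => s - T/2) := by
        filter_upwards [hball] with s hs
        show (s - T/2) * B s = s - T/2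
        have hrin' : B.rIn = T/2 - δ/2 := rfl
        rw [B.one_of_mem_closedBall (by
          rw [hrin']
          exact mem_of_mem_of_subset hs ball_subset_closedBall), mul_one]
      rw [hev.deriv_eq, deriv_sub_const, deriv_id'']
    obtain ⟨hi1m, -, -⟩ := hbalance χm hχm1 hχm2 hχm3 (ψ k) (hψ1 k) (hψ2 k) (hψ3 k)
    have hsubJ : Ioo δ (T - δ) ×ˢ Ω ⊆ Ioo 0 T ×ˢ Ω :=
      Set.prod_mono (fun t ht => ⟨lt_trans hδpos ht.1, by
        obtain ⟨h1, h2⟩ := ht; linarith⟩) subset_rfl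
    have hres : IntegrableOn (fun q : ℝ × Eu n => deriv χm q.1 * (‖u q.1 q.2‖^2/2 * ψ k q.2))
        (Ioo δ (T - δ) ×ˢ Ω) volume := hi1m.mono_set hsubJ
    have hres2 : IntegrableOn (fun q : ℝ × Eu n => ‖u q.1 q.2‖^2/2 * ψ k q.2)
        (Ioo δ (T - δ) ×ˢ Ω) volume := by
      refine hres.congr_fun (fun q hq => ?_) (measurableSet_Ioo.prod hmeasΩ)
      dsimp only
      rw [hder1 q.1 hq.1, one_mul]
    have hprodmeas2 : volume.restrict (Ioo δ (T-δ) ×ˢ Ω)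
        = (volume.restrict (Ioo δ (T-δ))).prod (volume.restrict Ω) := by
      rw [Measure.prod_restrict, ← Measure.volume_eq_prod]
    have h5 : Integrable (fun q : ℝ × Eu n => ‖u q.1 q.2‖^2/2 * ψ k q.2)
        ((volume.restrict (Ioo δ (T-δ))).prod (volume.restrict Ω)) := by
      rw [← hprodmeas2]; exact hres2
    exact h5.integral_prod_left
  -- a.e. convergence of the truncated energies
  have CONV : ∀ᵐ t ∂volume.restrict (Ioo 0 T),
      Tendsto (fun k => Eψ k t) atTop (𝓝 (E t)) := by
    filter_upwards [huL2] with t ht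
    have hInt : Integrable (fun x => ‖u t x‖ ^ 2) (volume.restrict Ω) := by
      have h1 := ht.integrable_norm_rpow (by norm_num) (by norm_num)
      apply (integrable_congr (Eventually.of_forall fun x => ?_)).1 h1
      rw [show ((2:ℝ≥0∞).toReal) = ((2:ℕ):ℝ) by simp, Real.rpow_natCast]
    have hb : Integrable (fun x => ‖u t x‖ ^ 2 / 2) (volume.restrict Ω) := hInt.div_const 2
    have hmeas2 : AEStronglyMeasurable (fun x => ‖u t x‖ ^ 2 / 2) (volume.restrict Ω) :=
      hb.aestronglyMeasurable
    refine tendsto_integral_of_dominated_convergence (fun x => ‖u t x‖ ^ 2 / 2)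
      (fun k => hmeas2.mul ((hψ1 k).continuous.aestronglyMeasurable)) hb ?_ ?_
    · intro k
      refine Eventually.of_forall (fun x => ?_)
      rw [Real.norm_eq_abs, abs_mul]
      have h1 : (0:ℝ) ≤ ‖u t x‖^2/2 := by positivity
      have h3 : 0 ≤ ψ k x := by rw [hψ4 k x]; exact phi_nonneg _
      have h4 : ψ k x ≤ 1 := by rw [hψ4 k x]; exact phi_le_one _
      rw [abs_of_nonneg h1, abs_of_nonneg h3]
      nlinarith
    · rw [ae_restrict_iff' hmeasΩ]
      refine Eventually.of_forall (fun x hx => ?_)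
      have hdx : 0 < infDist x Ωᶜ := hdpos x hx
      have h5 : Tendsto ηs atTop (𝓝 0) := hηs0.mono_right nhdsWithin_le_nhds
      have hev : ∀ᶠ k in atTop, ‖u t x‖ ^ 2 / 2 = ‖u t x‖ ^ 2 / 2 * ψ k x := by
        filter_upwards [h5.eventually_lt_const
          (show (0:ℝ) < 2 * infDist x Ωᶜ by positivity)] with k hk
        rw [hψ4 k x, phi_one (by rw [le_div_iff₀ (hηspos k)]; linarith), mul_one]
      exact tendsto_const_nhds.congr' hev
  -- ASSEMBLY
  have CONV' : ∀ᵐ t ∂volume, t ∈ Ioo 0 T → Tendsto (fun k => Eψ k t) atTop (𝓝 (E t)) :=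
    (ae_restrict_iff' measurableSet_Ioo).1 CONV
  have hosc : ∀ k m : ℕ, ∃ N : Set ℝ, volume N = 0 ∧ ∀ t₁ ∉ N, ∀ t₂ ∉ N,
      t₁ ∈ Ioo (T/(m+3)) (T - T/(m+3)) → t₂ ∈ Ioo (T/(m+3)) (T - T/(m+3)) →
      |(Ioo (T/(m+3)) (T - T/(m+3))).indicator (Eψ k) t₁ -
       (Ioo (T/(m+3)) (T - T/(m+3))).indicator (Eψ k) t₂| ≤ M * fluxr k := by
    intro k m
    set δ : ℝ := T/(m+3) with hδdef
    have hδpos : 0 < δ := by positivity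
    have hδltT : δ < T := by
      rw [hδdef, div_lt_iff₀ (by positivity)]
      nlinarith [Nat.cast_nonneg (α := ℝ) m]
    have hg : Integrable ((Ioo δ (T - δ)).indicator (Eψ k)) volume :=
      (INT k m).integrable_indicator measurableSet_Ioo
    apply osc hg
    intro χ hχ1 hχ2 hχ3 hχ4
    have hsubIoo : Ioo δ (T - δ) ⊆ Ioo 0 T := fun t ht => by
      obtain ⟨h1, h2⟩ := ht
      exact ⟨lt_trans hδpos h1, by linarith⟩
    have hext : (fun t => deriv χ t * (Ioo δ (T - δ)).indicator (Eψ k) t)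
        = (Ioo 0 T).indicator (fun t => deriv χ t * Eψ k t) := by
      funext t
      by_cases ht : t ∈ Ioo δ (T - δ)
      · rw [indicator_of_mem ht, indicator_of_mem (hsubIoo ht)]
      · have hd0 : deriv χ t = 0 := by
          by_contra hc
          exact ht (hχ3 (support_deriv_subset (mem_support.2 hc)))
        rw [hd0, zero_mul]
        by_cases ht2 : t ∈ Ioo 0 T
        · rw [indicator_of_mem ht2, hd0, zero_mul]
        · rw [indicator_of_notMem ht2]
    rw [hext, integral_indicator measurableSet_Ioo]
    exact KEY k χ hχ1 hχ2 (subset_trans hχ3 hsubIoo) hχ4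
  choose N hN1 hN2 using hosc
  have hNall : ∀ᵐ t ∂volume, ∀ k m : ℕ, t ∉ N k m :=
    ae_all_iff.2 (fun k => ae_all_iff.2 (fun m => measure_eq_zero_iff_ae_notMem.1 (hN1 k m)))
  rw [ae_restrict_iff' measurableSet_Ioo]
  filter_upwards [CONV', hNall] with t₁ hconv₁ hN₁
  intro ht₁
  rw [ae_restrict_iff' measurableSet_Ioo]
  filter_upwards [CONV', hNall] with t₂ hconv₂ hN₂
  intro ht₂
  have hrpos : 0 < min (min t₁ t₂) (min (T - t₁) (T - t₂)) := by
    obtain ⟨ha1, ha2⟩ := ht₁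
    obtain ⟨hb1, hb2⟩ := ht₂
    exact lt_min (lt_min ha1 hb1) (lt_min (by linarith) (by linarith))
  obtain ⟨m, hm⟩ : ∃ m : ℕ, T/(m+3) < min (min t₁ t₂) (min (T - t₁) (T - t₂)) := by
    have h6 : Tendsto (fun m : ℕ => T/((m:ℝ)+3)) atTop (𝓝 0) := by
      have h7 := (tendsto_const_div_atTop_nhds_zero_nat T).comp (tendsto_add_atTop_nat 3)
      refine h7.congr (fun m => ?_)
      simp only [Function.comp_apply]
      push_cast
      ring_nf
    exact (h6.eventually_lt_const hrpos).exists
  have ht₁m : t₁ ∈ Ioo (T/(m+3)) (T - T/(m+3)) := by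
    constructor
    · exact lt_of_lt_of_le hm (le_trans (min_le_left _ _) (min_le_left _ _))
    · have h8 : T/(m+3) < T - t₁ := lt_of_lt_of_le hm
        (le_trans (min_le_right _ _) (min_le_left _ _))
      linarith
  have ht₂m : t₂ ∈ Ioo (T/(m+3)) (T - T/(m+3)) := by
    constructor
    · exact lt_of_lt_of_le hm (le_trans (min_le_left _ _) (min_le_right _ _))
    · have h8 : T/(m+3) < T - t₂ := lt_of_lt_of_le hm
        (le_trans (min_le_right _ _) (min_le_right _ _))
      linarith
  have hub : ∀ k, |Eψ k t₁ - Eψ k t₂| ≤ M * fluxr k := by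
    intro k
    have h9 := hN2 k m t₁ (hN₁ k m) t₂ (hN₂ k m) ht₁m ht₂m
    rwa [indicator_of_mem ht₁m, indicator_of_mem ht₂m] at h9
  have hlim : Tendsto (fun k => |Eψ k t₁ - Eψ k t₂|) atTop (𝓝 |E t₁ - E t₂|) :=
    ((hconv₁ ht₁).sub (hconv₂ ht₂)).abs
  have hlim2 : Tendsto (fun k => M * fluxr k) atTop (𝓝 0) := by
    simpa using hfluxr0.const_mul M
  have h8 : |E t₁ - E t₂| ≤ 0 := le_of_tendsto_of_tendsto' hlim hlim2 hub
  have h9 : E t₁ = E t₂ := by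
    have h10 := abs_nonneg (E t₁ - E t₂)
    have h11 : E t₁ - E t₂ = 0 := by rw [← abs_eq_zero]; linarith
    linarith
  have h12 : ∀ t : ℝ, (∫ x in Ω, ‖u t x‖ ^ 2) = 2 * E t := by
    intro t
    rw [hEdef]
    simp only
    rw [integral_div]
    ring
  rw [h12, h12, h9]
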